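/- Let p be an odd prime with p ≥ 5, let H be a subgroup of the alternating group A_p on p letters, and let 𝒪₁ and 𝒪₂ be the two distinct A_p-conjugacy classes of p-cycles. Then the number of H-conjugacy classes of elements of order p that are contained in 𝒪₁ equals the number of H-conjugacy classes of elements of order p that are contained in 𝒪₂. -/

import Mathlib

open Equiv Equiv.Perm

/-- permCongr as a MulEquiv -/
def permCongrME {α β : Type*} (e : α ≃ β) : Perm α ≃* Perm β :=
  { e.permCongr with
    map_mul' := fun f g => by ext x; simp [Equiv.permCongr_apply, Equiv.Perm.mul_apply] }

lemma permCongrME_apply {α β : Type*} (e : α ≃ β) (π : Perm α) (x : β) :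
    permCongrME e π x = e (π (e.symm x)) := rfl

lemma isCycle_permCongrME {α β : Type*} (e : α ≃ β) {π : Perm α} (h : π.IsCycle) :
    (permCongrME e π).IsCycle := by
  obtain ⟨x, hx, hsc⟩ := h
  refine ⟨e x, by simpa [permCongrME_apply] using hx, fun y hy => ?_⟩
  have hy' : π (e.symm y) ≠ e.symm y := by
    intro hcon
    apply hy
    simp [permCongrME_apply, hcon]
  obtain ⟨i, hi⟩ := hsc hy'
  refine ⟨i, ?_⟩
  rw [← map_zpow, permCongrME_apply, e.symm_apply_apply, hi, e.apply_symm_apply]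

lemma support_permCongrME {α β : Type*} [DecidableEq α] [Fintype α] [DecidableEq β] [Fintype β]
    (e : α ≃ β) (π : Perm α) :
    (permCongrME e π).support = π.support.map e.toEmbedding := by
  ext y
  simp only [Equiv.Perm.mem_support, Finset.mem_map_equiv, permCongrME_apply]
  constructor
  · intro h hcon; apply h; rw [hcon]; simp
  · intro h hcon; exact h (e.injective (hcon.trans (e.apply_symm_apply y).symm))

lemma sign_permCongrME {α β : Type*} [DecidableEq α] [Fintype α] [DecidableEq β] [Fintype β]
    (e : α ≃ β) (π : Perm α) : sign (permCongrME e π) = sign π :=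
  Equiv.Perm.sign_permCongr e π

section ZModSide

variable (p : ℕ) [hp : Fact p.Prime] (hp5 : 5 ≤ p)

lemma zmod_cycle_isCycle : (Equiv.addLeft (1 : ZMod p)).IsCycle := by
  have h1 : (1 : ZMod p) ≠ 0 := one_ne_zero
  refine ⟨0, by simp [h1], fun y _ => ?_⟩
  refine ⟨(y.val : ℤ), ?_⟩
  rw [zpow_natCast, nsmul_addLeft]
  simp [ZMod.natCast_val, ZMod.cast_id]

lemma zmod_cycle_support : (Equiv.addLeft (1 : ZMod p)).support = Finset.univ := by
  ext x
  simp only [Equiv.Perm.mem_support, Finset.mem_univ, iff_true]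
  intro h
  simp only [Equiv.coe_addLeft] at h
  exact one_ne_zero (right_eq_add.mp h.symm : (1:ZMod p) = 0)

end ZModSide

lemma exists_odd_conj_pow (p : ℕ) [hp : Fact p.Prime] (hp5 : 5 ≤ p) :
    ∃ k : ℕ, Nat.Coprime k p ∧ ∀ σ : Perm (Fin p), σ.IsCycle → σ.support.card = p →
      ∃ τ : Perm (Fin p), Equiv.Perm.sign τ = -1 ∧ τ * σ * τ⁻¹ = σ ^ k := by
  haveI : NeZero p := ⟨hp.out.ne_zero⟩
  obtain ⟨u, hu⟩ := IsCyclic.exists_generator (α := (ZMod p)ˣ)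
  set k : ℕ := ((u : ZMod p)).val with hk
  have hku : ((k : ℕ) : ZMod p) = (u : ZMod p) := by
    rw [hk, ZMod.natCast_val, ZMod.cast_id]
  have hkp : Nat.Coprime k p := by
    rw [Nat.coprime_comm]
    refine (Nat.Prime.coprime_iff_not_dvd hp.out).mpr (fun hdvd => ?_)
    have : ((k : ℕ) : ZMod p) = 0 := (ZMod.natCast_eq_zero_iff k p).mpr hdvd
    rw [hku] at this
    exact u.ne_zero this
  refine ⟨k, hkp, fun σ hσcyc hσsupp => ?_⟩
  -- the multiplication permutation on ZMod p
  have hune : u ≠ 1 := by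
    intro h1
    have hord := orderOf_eq_card_of_forall_mem_zpowers hu
    rw [h1, orderOf_one, Nat.card_eq_fintype_card, ZMod.card_units] at hord
    omega
  set m : Perm (ZMod p) := MulAction.toPermHom (ZMod p)ˣ (ZMod p) u with hm
  have hmapp : ∀ x : ZMod p, m x = (u : ZMod p) * x := fun x => rfl
  have hmsupp : m.support = ({0} : Finset (ZMod p))ᶜ := by
    ext x
    simp only [Equiv.Perm.mem_support, Finset.mem_compl, Finset.mem_singleton]
    constructor
    · intro h h0; apply h; rw [h0, hmapp]; ring
    · intro hx0 hcon
      rw [hmapp] at hcon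
      apply hune
      have : (u : ZMod p) = 1 := by
        have := hcon.trans (one_mul x).symm
        exact mul_right_cancel₀ hx0 this
      exact Units.ext this
  have hmcyc : m.IsCycle := by
    refine ⟨1, ?_, fun y hy => ?_⟩
    · rw [hmapp, mul_one]
      intro hcon; exact hune (Units.ext hcon)
    · have hy0 : y ≠ 0 := by
        intro h0; apply hy; rw [h0, hmapp]; ring
      obtain ⟨i, hi⟩ := Subgroup.mem_zpowers_iff.mp (hu (Units.mk0 y hy0))
      refine ⟨i, ?_⟩
      rw [← map_zpow]
      have : (MulAction.toPermHom (ZMod p)ˣ (ZMod p) (u ^ i)) 1 = ((u ^ i : (ZMod p)ˣ) : ZMod p) * 1 := rfl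
      rw [this, hi, mul_one]
      rfl
  have hp1even : Even (p - 1) :=
    Nat.Odd.sub_odd (hp.out.odd_of_ne_two (by omega)) odd_one
  have hmsign : Equiv.Perm.sign m = -1 := by
    rw [hmcyc.sign, hmsupp, Finset.card_compl, Finset.card_singleton, ZMod.card,
      hp1even.neg_one_pow]
  -- the standard cycle
  set c : Perm (ZMod p) := Equiv.addLeft (1 : ZMod p) with hc
  have hconj : m * c * m⁻¹ = c ^ k := by
    ext x
    rw [nsmul_addLeft]
    have hminv : m⁻¹ = MulAction.toPermHom (ZMod p)ˣ (ZMod p) u⁻¹ := by rw [hm, ← map_inv]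
    have : (m * c * m⁻¹) x = (u : ZMod p) * (1 + (↑u⁻¹ : ZMod p) * x) := by
      rw [Equiv.Perm.mul_apply, Equiv.Perm.mul_apply, hminv]
      rfl
    rw [this]
    have : (u : ZMod p) * ((↑u⁻¹ : ZMod p) * x) = x := by
      rw [← mul_assoc, ← Units.val_mul, mul_inv_cancel, Units.val_one, one_mul]
    rw [mul_add, this, mul_one]
    simp only [Equiv.coe_addLeft, nsmul_eq_mul, mul_one, hku]
  -- transport to Fin p
  have e : Fin p ≃ ZMod p := Fintype.equivOfCardEq (by simp [ZMod.card])
  set Φ := permCongrME e.symm with hΦ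
  have hc'cyc : (Φ c).IsCycle := isCycle_permCongrME e.symm (zmod_cycle_isCycle p)
  have hc'supp : (Φ c).support.card = p := by
    rw [support_permCongrME, Finset.card_map, zmod_cycle_support p, Finset.card_univ, ZMod.card]
  obtain ⟨g, hg⟩ := isConj_iff.mp (hσcyc.isConj hc'cyc (by rw [hσsupp, hc'supp]))
  refine ⟨g⁻¹ * Φ m * g, ?_, ?_⟩
  · rw [Equiv.Perm.sign_mul, Equiv.Perm.sign_mul, Equiv.Perm.sign_inv, sign_permCongrME, hmsign]
    rcases Int.units_eq_one_or (Equiv.Perm.sign g) with h | h <;> rw [h] <;> rfl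
  · have hrel : Φ m * Φ c * (Φ m)⁻¹ = (Φ c) ^ k := by
      rw [← map_inv, ← map_mul, ← map_mul, hconj, map_pow]
    have hσ : σ = g⁻¹ * Φ c * g := by
      rw [← hg]; group
    rw [hσ]
    have : g⁻¹ * Φ m * g * (g⁻¹ * Φ c * g) * (g⁻¹ * Φ m * g)⁻¹
        = g⁻¹ * (Φ m * Φ c * (Φ m)⁻¹) * g := by group
    rw [this, hrel]
    have h2 := conj_pow (i := k) (a := g⁻¹) (b := Φ c)
    rw [inv_inv] at h2
    exact h2.symm

lemma mem_zpowers_of_commute_full_cycle {α : Type*} [Fintype α] [DecidableEq α]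
    {c g : Perm α} (hc : c.IsCycle) (hsupp : c.support = Finset.univ)
    (h : Commute g c) : g ∈ Subgroup.zpowers c := by
  obtain ⟨hc', hz⟩ := hc.commute_iff.mp h
  have : Equiv.Perm.ofSubtype (g.subtypePerm hc') = g := by
    ext x
    exact Equiv.Perm.ofSubtype_subtypePerm_of_mem hc' (by rw [hsupp]; exact Finset.mem_univ x)
  rwa [this] at hz

lemma sign_eq_one_of_commute_full_cycle {α : Type*} [Fintype α] [DecidableEq α]
    {c g : Perm α} (hc : c.IsCycle) (hsupp : c.support = Finset.univ)
    (hsgn : Equiv.Perm.sign c = 1)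
    (h : Commute g c) : Equiv.Perm.sign g = 1 := by
  obtain ⟨i, hi⟩ := Subgroup.mem_zpowers_iff.mp (mem_zpowers_of_commute_full_cycle hc hsupp h)
  rw [← hi, map_zpow, hsgn, one_zpow]

lemma orderOf_conj' {G : Type*} [Group G] (h a : G) : orderOf (h * a * h⁻¹) = orderOf a := by
  have := orderOf_injective (MulAut.conj h).toMonoidHom (MulEquiv.injective _) a
  simpa using this

lemma mem_family_image {G : Type*} [Group G] {H : Subgroup G} {p k : ℕ} {σ σ' : G}
    (hB : IsConj (σ ^ k) σ')
    (hk : ∀ a : G, orderOf a = p → orderOf (a ^ k) = p)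
    {C : Set G}
    (hC : (∃ a ∈ H, orderOf a = p ∧ C = {x | ∃ h ∈ H, h * a * h⁻¹ = x}) ∧
      C ⊆ {x | IsConj σ x}) :
    (∃ a ∈ H, orderOf a = p ∧ (· ^ k) '' C = {x | ∃ h ∈ H, h * a * h⁻¹ = x}) ∧
      (· ^ k) '' C ⊆ {x | IsConj σ' x} := by
  obtain ⟨⟨a, haH, haord, hCeq⟩, hCsub⟩ := hC
  constructor
  · refine ⟨a ^ k, pow_mem haH k, hk a haord, ?_⟩
    subst hCeq
    ext y
    simp only [Set.mem_image, Set.mem_setOf_eq]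
    constructor
    · rintro ⟨x, ⟨h, hh, rfl⟩, rfl⟩
      exact ⟨h, hh, conj_pow.symm⟩
    · rintro ⟨h, hh, rfl⟩
      exact ⟨h * a * h⁻¹, ⟨h, hh, rfl⟩, conj_pow⟩
  · rintro y ⟨x, hx, rfl⟩
    have hconj : IsConj σ x := hCsub hx
    obtain ⟨c, hc⟩ := isConj_iff.mp hconj
    have hxk : IsConj (σ ^ k) (x ^ k) := isConj_iff.mpr ⟨c, by rw [← hc, conj_pow]⟩
    exact hB.symm.trans hxk

lemma image_image_cancel {G : Type*} [Group G] {H : Subgroup G} {p k k' : ℕ}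
    (hinv : ∀ x : G, orderOf x = p → (x ^ k) ^ k' = x) {C : Set G}
    (hC : ∃ a ∈ H, orderOf a = p ∧ C = {x | ∃ h ∈ H, h * a * h⁻¹ = x}) :
    (· ^ k') '' ((· ^ k) '' C) = C := by
  obtain ⟨a, haH, haord, rfl⟩ := hC
  rw [Set.image_image]
  have h1 : ∀ x ∈ {x : G | ∃ h ∈ H, h * a * h⁻¹ = x}, (x ^ k) ^ k' = id x := by
    rintro x ⟨h, hh, rfl⟩
    exact hinv _ ((orderOf_conj' (h : G) a).trans haord)
  rw [Set.image_congr h1, Set.image_id]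

theorem card_subgroup_classes_in_two_pCycle_classes_eq (p : ℕ) (hp : p.Prime) (hp5 : 5 ≤ p)
    (H : Subgroup (alternatingGroup (Fin p)))
    (σ₁ σ₂ : alternatingGroup (Fin p))
    (hcyc₁ : (σ₁ : Equiv.Perm (Fin p)).IsCycle)
    (hsupp₁ : (σ₁ : Equiv.Perm (Fin p)).support.card = p)
    (hcyc₂ : (σ₂ : Equiv.Perm (Fin p)).IsCycle)
    (hsupp₂ : (σ₂ : Equiv.Perm (Fin p)).support.card = p)
    (hne : ¬ IsConj σ₁ σ₂) :
    Set.ncard {C : Set (alternatingGroup (Fin p)) |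
        (∃ a ∈ H, orderOf a = p ∧ C = {x | ∃ h ∈ H, h * a * h⁻¹ = x}) ∧
        C ⊆ {x | IsConj σ₁ x}} =
    Set.ncard {C : Set (alternatingGroup (Fin p)) |
        (∃ a ∈ H, orderOf a = p ∧ C = {x | ∃ h ∈ H, h * a * h⁻¹ = x}) ∧
        C ⊆ {x | IsConj σ₂ x}} := by
  haveI : Fact p.Prime := ⟨hp⟩
  haveI : NeZero p := ⟨hp.ne_zero⟩
  obtain ⟨k, hkp, hodd⟩ := exists_odd_conj_pow p hp5
  obtain ⟨τ, hτsign, hτ⟩ := hodd (σ₁ : Perm (Fin p)) hcyc₁ hsupp₁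
  -- a conjugator between σ₁ and σ₂ in the symmetric group
  obtain ⟨g, hg⟩ := isConj_iff.mp (hcyc₁.isConj hcyc₂ (hsupp₁.trans hsupp₂.symm))
  have hσ₁sgn : Equiv.Perm.sign (σ₁ : Perm (Fin p)) = 1 :=
    Equiv.Perm.mem_alternatingGroup.mp σ₁.2
  have hgsign : Equiv.Perm.sign g = -1 := by
    rcases Int.units_eq_one_or (Equiv.Perm.sign g) with h | h
    · exfalso
      apply hne
      refine isConj_iff.mpr ⟨⟨g, Equiv.Perm.mem_alternatingGroup.mpr h⟩, Subtype.ext ?_⟩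
      push_cast
      exact hg
    · exact h
  -- conjugacy of σ₁ ^ k with σ₂ inside the alternating group
  have hvsign : Equiv.Perm.sign (g * τ⁻¹) = 1 := by
    rw [map_mul, map_inv, hgsign, hτsign]
    rfl
  have hvrel : (g * τ⁻¹) * ((σ₁ : Perm (Fin p)) ^ k) * (g * τ⁻¹)⁻¹ = (σ₂ : Perm (Fin p)) := by
    have h1 : τ⁻¹ * ((σ₁ : Perm (Fin p)) ^ k) * τ = (σ₁ : Perm (Fin p)) := by
      rw [← hτ]; group
    have h2 : (g * τ⁻¹) * ((σ₁ : Perm (Fin p)) ^ k) * (g * τ⁻¹)⁻¹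
        = g * (τ⁻¹ * ((σ₁ : Perm (Fin p)) ^ k) * τ) * g⁻¹ := by group
    rw [h2, h1, hg]
  have hB : IsConj (σ₁ ^ k) σ₂ := by
    refine isConj_iff.mpr ⟨⟨g * τ⁻¹, Equiv.Perm.mem_alternatingGroup.mpr hvsign⟩, Subtype.ext ?_⟩
    push_cast
    exact hvrel
  -- the modular inverse k'
  set k' : ℕ := ((k : ZMod p)⁻¹).val with hk'
  have hknz : ((k : ℕ) : ZMod p) ≠ 0 := by
    rw [Ne, ZMod.natCast_eq_zero_iff]
    exact (Nat.Prime.coprime_iff_not_dvd hp).mp hkp.symm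
  have hk'cast : ((k' : ℕ) : ZMod p) = ((k : ℕ) : ZMod p)⁻¹ := by
    rw [hk', ZMod.natCast_val, ZMod.cast_id]
  have hkk' : k * k' ≡ 1 [MOD p] := by
    have : ((k * k' : ℕ) : ZMod p) = ((1 : ℕ) : ZMod p) := by
      push_cast
      rw [hk'cast, mul_inv_cancel₀ hknz]
    exact (ZMod.natCast_eq_natCast_iff _ _ _).mp this
  have hk'p : Nat.Coprime k' p := by
    rw [Nat.coprime_comm]
    refine (Nat.Prime.coprime_iff_not_dvd hp).mpr (fun hdvd => ?_)
    have : ((k' : ℕ) : ZMod p) = 0 := (ZMod.natCast_eq_zero_iff k' p).mpr hdvd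
    rw [hk'cast] at this
    exact inv_ne_zero hknz this
  have hinv : ∀ x : alternatingGroup (Fin p), orderOf x = p → (x ^ k) ^ k' = x := by
    intro x hx
    rw [← pow_mul]
    conv_rhs => rw [← pow_one x]
    rw [pow_eq_pow_iff_modEq, hx]
    exact hkk'
  have hinv' : ∀ x : alternatingGroup (Fin p), orderOf x = p → (x ^ k') ^ k = x := by
    intro x hx
    rw [← pow_mul]
    conv_rhs => rw [← pow_one x]
    rw [pow_eq_pow_iff_modEq, hx]
    rw [mul_comm] at hkk'
    exact hkk'
  have hkord : ∀ a : alternatingGroup (Fin p), orderOf a = p → orderOf (a ^ k) = p := by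
    intro a ha
    rw [Nat.Coprime.orderOf_pow (by rw [ha]; exact hkp.symm), ha]
  have hk'ord : ∀ a : alternatingGroup (Fin p), orderOf a = p → orderOf (a ^ k') = p := by
    intro a ha
    rw [Nat.Coprime.orderOf_pow (by rw [ha]; exact hk'p.symm), ha]
  have ord₁ : orderOf σ₁ = p := by
    have h1 := orderOf_injective (alternatingGroup (Fin p)).subtype Subtype.coe_injective σ₁
    rw [← h1]
    show orderOf (σ₁ : Perm (Fin p)) = p
    rw [hcyc₁.orderOf, hsupp₁]
  -- conjugacy of σ₂ ^ k' with σ₁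
  have hB' : IsConj (σ₂ ^ k') σ₁ := by
    obtain ⟨w, hw⟩ := isConj_iff.mp hB
    refine (isConj_iff.mpr ⟨w, ?_⟩ : IsConj σ₁ (σ₂ ^ k')).symm
    rw [← hw, conj_pow, hinv σ₁ ord₁]
  -- the bijection between the two families
  have himg : (fun C => (· ^ k) '' C) ''
      {C : Set (alternatingGroup (Fin p)) |
        (∃ a ∈ H, orderOf a = p ∧ C = {x | ∃ h ∈ H, h * a * h⁻¹ = x}) ∧
        C ⊆ {x | IsConj σ₁ x}} =
      {C : Set (alternatingGroup (Fin p)) |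
        (∃ a ∈ H, orderOf a = p ∧ C = {x | ∃ h ∈ H, h * a * h⁻¹ = x}) ∧
        C ⊆ {x | IsConj σ₂ x}} := by
    ext C
    constructor
    · rintro ⟨D, hD, rfl⟩
      exact mem_family_image hB hkord hD
    · intro hC
      refine ⟨(· ^ k') '' C, mem_family_image hB' hk'ord hC, ?_⟩
      exact image_image_cancel hinv' hC.1
  have hinj : Set.InjOn (fun C => (· ^ k) '' C)
      {C : Set (alternatingGroup (Fin p)) |
        (∃ a ∈ H, orderOf a = p ∧ C = {x | ∃ h ∈ H, h * a * h⁻¹ = x}) ∧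
        C ⊆ {x | IsConj σ₁ x}} := by
    intro C1 h1 C2 h2 heq
    have h3 := congrArg (fun S => (· ^ k') '' S) heq
    simp only at h3
    rwa [image_image_cancel hinv h1.1, image_image_cancel hinv h2.1] at h3
  rw [← himg]
  exact (Set.ncard_image_of_injOn hinj).symm
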